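/- Let B be a saturated DBA recognizing a prefix-independent objective W, and suppose q_max is a state that is both an α-free-maximum and an α-free-cycle-maximum. Define F = {c ∈ C | (q_max, c) ∈ α}. Then W = Büchi(F): an infinite word is in W if and only if it contains infinitely many colors from F. -/

import Mathlib

/-- Concatenate a finite word in front of an infinite word. -/
def extWord {C : Type} (w : List C) (s : ℕ → C) : ℕ → C :=
  fun n => if h : n < w.length then w.get ⟨n, h⟩ else s (n - w.length)

/-- Winning continuations `w⁻¹W` of a finite word `w` w.r.t. objective `W`. -/
def winCont {C : Type} (W : Set (ℕ → C)) (w : List C) : Set (ℕ → C) :=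
  {s | extWord w s ∈ W}

/-- The run of a deterministic automaton from state `q` on infinite word `s`. -/
def dbaRun {C Q : Type} (δ : Q → C → Q) (q : Q) (s : ℕ → C) : ℕ → Q
  | 0 => q
  | n + 1 => δ (dbaRun δ q s n) (s n)

/-- The set of infinite words accepted (Büchi condition on transitions `acc`) from state `q`. -/
def accFrom {C Q : Type} (δ : Q → C → Q) (acc : Q → C → Prop) (q : Q) : Set (ℕ → C) :=
  {s | ∀ N, ∃ n ≥ N, acc (dbaRun δ q s n) (s n)}

/-- Extension `δ*` of the transition function to finite words. -/
def dstar {C Q : Type} (δ : Q → C → Q) (q : Q) (w : List C) : Q := w.foldl δ q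

/-- `Safe(q)`: finite words whose run from `q` takes no Büchi transition. -/
def safeWords {C Q : Type} (δ : Q → C → Q) (acc : Q → C → Prop) (q : Q) : Set (List C) :=
  {w | ∀ (i : ℕ) (h : i < w.length), ¬ acc (dstar δ q (w.take i)) (w.get ⟨i, h⟩)}

/-- `SafeCycles(q)`: α-free words from `q` that return to `q`. -/
def safeCycles {C Q : Type} (δ : Q → C → Q) (acc : Q → C → Prop) (q : Q) : Set (List C) :=
  {w | w ∈ safeWords δ acc q ∧ dstar δ q w = q}

/-- A DBA is saturated if no strictly larger set of Büchi transitions recognizes the same language. -/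
def Saturated {C Q : Type} (δ : Q → C → Q) (acc : Q → C → Prop) (qinit : Q) : Prop :=
  ∀ acc' : Q → C → Prop, (∀ q c, acc q c → acc' q c) → acc' ≠ acc →
    accFrom δ acc' qinit ≠ accFrom δ acc qinit

/-- Prefix-independence of an objective. -/
def PrefixIndependent {C : Type} (W : Set (ℕ → C)) : Prop :=
  ∀ (w : List C) (s : ℕ → C), s ∈ W ↔ extWord w s ∈ W

/-- The Büchi condition: infinitely many letters in `F`. -/
def BuchiCond {C : Type} (F : Set C) : Set (ℕ → C) :=
  {s | ∀ N, ∃ n ≥ N, s n ∈ F}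

/-- DBA-recognizability of an objective. -/
def DBARecognizable {C : Type} (W : Set (ℕ → C)) : Prop :=
  ∃ (Q : Type) (_ : Fintype Q) (qinit : Q) (δ : Q → C → Q) (acc : Q → C → Prop),
    accFrom δ acc qinit = W

/-! ### Auxiliary lemmas -/

section Aux

variable {C Q : Type} (δ : Q → C → Q) (acc : Q → C → Prop)

lemma st19_dstar_cons (q : Q) (c : C) (w : List C) :
    dstar δ q (c :: w) = dstar δ (δ q c) w := rfl

lemma st19_dstar_append (q : Q) (u v : List C) :
    dstar δ q (u ++ v) = dstar δ (dstar δ q u) v := by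
  simp [dstar, List.foldl_append]

lemma st19_safe_nil (q : Q) : ([] : List C) ∈ safeWords δ acc q := by
  intro i h
  exact absurd h (Nat.not_lt_zero i)

lemma st19_safe_cons {q : Q} {c : C} {w : List C} :
    (c :: w) ∈ safeWords δ acc q ↔ ¬ acc q c ∧ w ∈ safeWords δ acc (δ q c) := by
  constructor
  · intro h
    refine ⟨?_, ?_⟩
    · have h0 := h 0 (by simp)
      simpa [dstar] using h0
    · intro i hi
      have h1 := h (i + 1) (by simpa using Nat.succ_lt_succ hi)
      simpa [dstar] using h1
  · rintro ⟨h1, h2⟩ i hi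
    cases i with
    | zero => simpa [dstar] using h1
    | succ i =>
      have := h2 i (by simpa using Nat.lt_of_succ_lt_succ hi)
      simpa [dstar] using this

lemma st19_safe_append {q : Q} {u v : List C} :
    (u ++ v) ∈ safeWords δ acc q ↔
      u ∈ safeWords δ acc q ∧ v ∈ safeWords δ acc (dstar δ q u) := by
  induction u generalizing q with
  | nil =>
    simp only [List.nil_append]
    constructor
    · intro h; exact ⟨st19_safe_nil δ acc q, h⟩
    · intro h; exact h.2
  | cons c u ih =>
    simp only [List.cons_append, st19_safe_cons, ih, st19_dstar_cons, and_assoc]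

lemma st19_safe_singleton {q : Q} {c : C} :
    [c] ∈ safeWords δ acc q ↔ ¬ acc q c := by
  rw [show [c] = c :: ([] : List C) from rfl, st19_safe_cons]
  simp [st19_safe_nil]

lemma st19_nil_cycle (q : Q) : ([] : List C) ∈ safeCycles δ acc q :=
  ⟨st19_safe_nil δ acc q, rfl⟩

/-- Key insertion lemma: if `a ++ b` is a safe cycle at `qmax` and `γ` is a safe cycle
at `qmax`, then `a ++ γ ++ b` is a safe cycle at `qmax`.  Uses `hcycmax` twice. -/
lemma st19_insert_cycle {qmax : Q}
    (hcyc : ∀ p : Q, safeCycles δ acc p ⊆ safeCycles δ acc qmax)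
    {a b γ : List C}
    (hab : (a ++ b) ∈ safeCycles δ acc qmax) (hγ : γ ∈ safeCycles δ acc qmax) :
    (a ++ (γ ++ b)) ∈ safeCycles δ acc qmax := by
  obtain ⟨habs, habd⟩ := hab
  rw [st19_safe_append] at habs
  obtain ⟨ha, hb⟩ := habs
  rw [st19_dstar_append] at habd
  -- rotation: b ++ a is a safe cycle at r := dstar qmax a
  have hrot : (b ++ a) ∈ safeCycles δ acc (dstar δ qmax a) := by
    refine ⟨?_, ?_⟩
    · rw [st19_safe_append]
      exact ⟨hb, by rw [habd]; exact ha⟩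
    · rw [st19_dstar_append, habd]
  have hba := hcyc _ hrot
  obtain ⟨hbas, hbad⟩ := hba
  rw [st19_safe_append] at hbas
  obtain ⟨hb', ha'⟩ := hbas
  rw [st19_dstar_append] at hbad
  -- now build a ++ γ ++ b as a safe cycle at s' := dstar qmax b
  have hnew : (a ++ (γ ++ b)) ∈ safeCycles δ acc (dstar δ qmax b) := by
    refine ⟨?_, ?_⟩
    · rw [st19_safe_append]
      refine ⟨ha', ?_⟩
      rw [hbad, st19_safe_append]
      exact ⟨hγ.1, by rw [hγ.2]; exact hb'⟩
    · rw [st19_dstar_append, hbad, st19_dstar_append, hγ.2]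
  exact hcyc _ hnew

/-- Completion: every word avoiding the colors accepting at `qmax` extends to a safe
cycle at `qmax` (given cycle-maximality and availability of head-`c` safe cycles). -/
lemma st19_completion {qmax : Q}
    (hcyc : ∀ p : Q, safeCycles δ acc p ⊆ safeCycles δ acc qmax)
    (hY : ∀ c : C, ¬ acc qmax c → ∃ ρ : List C, (c :: ρ) ∈ safeCycles δ acc qmax) :
    ∀ w : List C, (∀ c ∈ w, ¬ acc qmax c) → ∃ b, (w ++ b) ∈ safeCycles δ acc qmax := by
  intro w
  induction w using List.reverseRecOn with
  | nil =>
    intro _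
    exact ⟨[], by simpa using st19_nil_cycle δ acc qmax⟩
  | append_singleton w e ih =>
    intro hfree
    obtain ⟨b', hb'⟩ := ih (fun c hc => hfree c (by simp [hc]))
    have he : ¬ acc qmax e := hfree e (by simp)
    obtain ⟨ρ, hy⟩ := hY e he
    have hins := st19_insert_cycle δ acc hcyc hb' hy
    refine ⟨ρ ++ b', ?_⟩
    have : w ++ ((e :: ρ) ++ b') = (w ++ [e]) ++ (ρ ++ b') := by
      simp [List.append_assoc]
    rwa [this] at hins

/-- Lemma A: every word avoiding colors accepting at `qmax` is safe from `qmax`. -/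
lemma st19_lemmaA {qmax : Q}
    (hcyc : ∀ p : Q, safeCycles δ acc p ⊆ safeCycles δ acc qmax)
    (hY : ∀ c : C, ¬ acc qmax c → ∃ ρ : List C, (c :: ρ) ∈ safeCycles δ acc qmax)
    (w : List C) (hfree : ∀ c ∈ w, ¬ acc qmax c) :
    w ∈ safeWords δ acc qmax := by
  obtain ⟨b, hb⟩ := st19_completion δ acc hcyc hY w hfree
  exact ((st19_safe_append δ acc).mp hb.1).1

/-! Finite segments of an infinite word. -/

def mseg (s : ℕ → C) : ℕ → ℕ → List C
  | _, 0 => []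
  | a, L + 1 => s a :: mseg s (a + 1) L

lemma st19_mseg_length (s : ℕ → C) : ∀ L a, (mseg s a L).length = L := by
  intro L
  induction L with
  | zero => intro a; rfl
  | succ L ih => intro a; simp [mseg, ih]

lemma st19_mseg_get (s : ℕ → C) :
    ∀ L a n (h : n < (mseg s a L).length), (mseg s a L).get ⟨n, h⟩ = s (a + n) := by
  intro L
  induction L with
  | zero => intro a n h; simp [st19_mseg_length] at h
  | succ L ih =>
    intro a n h
    cases n with
    | zero => simp [mseg]
    | succ n =>
      have := ih (a + 1) n (by rw [st19_mseg_length] at h ⊢; omega)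
      simp only [mseg, List.get_cons_succ]
      rw [show (s a :: mseg s (a + 1) L).get ⟨n + 1, h⟩ = s (a + 1 + n) from this]
      congr 1
      omega

lemma st19_mseg_mem (s : ℕ → C) :
    ∀ L a c, c ∈ mseg s a L → ∃ i, i < L ∧ c = s (a + i) := by
  intro L
  induction L with
  | zero => intro a c hc; simp [mseg] at hc
  | succ L ih =>
    intro a c hc
    simp only [mseg, List.mem_cons] at hc
    rcases hc with h | h
    · exact ⟨0, Nat.succ_pos L, by simpa using h⟩
    · obtain ⟨i, hi, hci⟩ := ih (a + 1) c h
      exact ⟨i + 1, by omega, by rw [hci]; congr 1; omega⟩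

lemma st19_mseg_concat (s : ℕ → C) :
    ∀ L a, mseg s a (L + 1) = mseg s a L ++ [s (a + L)] := by
  intro L
  induction L with
  | zero => intro a; simp [mseg]
  | succ L ih =>
    intro a
    show s a :: mseg s (a + 1) (L + 1) = (s a :: mseg s (a + 1) L) ++ [s (a + (L + 1))]
    rw [ih (a + 1)]
    simp only [List.cons_append]
    have harith : a + 1 + L = a + (L + 1) := by omega
    rw [harith]

lemma st19_dstar_mseg (q0 : Q) (s : ℕ → C) :
    ∀ L a, dstar δ (dbaRun δ q0 s a) (mseg s a L) = dbaRun δ q0 s (a + L) := by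
  intro L
  induction L with
  | zero => intro a; rfl
  | succ L ih =>
    intro a
    show dstar δ (dbaRun δ q0 s a) (s a :: mseg s (a + 1) L) = _
    rw [st19_dstar_cons]
    have hstep : δ (dbaRun δ q0 s a) (s a) = dbaRun δ q0 s (a + 1) := rfl
    rw [hstep, ih (a + 1)]
    congr 1
    omega

lemma st19_safe_mseg (q0 : Q) (s : ℕ → C) :
    ∀ L a, (∀ i < L, ¬ acc (dbaRun δ q0 s (a + i)) (s (a + i))) →
      mseg s a L ∈ safeWords δ acc (dbaRun δ q0 s a) := by
  intro L
  induction L with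
  | zero => intro a _; exact st19_safe_nil δ acc _
  | succ L ih =>
    intro a h
    show (s a :: mseg s (a + 1) L) ∈ _
    rw [st19_safe_cons]
    constructor
    · have := h 0 (Nat.succ_pos L)
      simpa using this
    · have hstep : δ (dbaRun δ q0 s a) (s a) = dbaRun δ q0 s (a + 1) := rfl
      rw [hstep]
      apply ih (a + 1)
      intro i hi
      have := h (i + 1) (by omega)
      have harith : a + 1 + i = a + (i + 1) := by omega
      rw [harith]
      exact this

/-! extWord / run lemmas. -/

lemma st19_ext_nil (s : ℕ → C) : extWord ([] : List C) s = s := by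
  funext n
  simp [extWord]

lemma st19_ext_cons_zero (c : C) (w : List C) (s : ℕ → C) :
    extWord (c :: w) s 0 = c := by
  simp [extWord]

lemma st19_ext_cons_succ (c : C) (w : List C) (s : ℕ → C) (n : ℕ) :
    extWord (c :: w) s (n + 1) = extWord w s n := by
  by_cases h : n < w.length
  · rw [extWord, extWord, dif_pos (by simpa using Nat.succ_lt_succ h), dif_pos h]
    rfl
  · rw [extWord, extWord, dif_neg (by simpa using fun hh => h (Nat.lt_of_succ_lt_succ hh)),
      dif_neg h]
    congr 1
    rw [List.length_cons]
    omega

lemma st19_run_shift (q : Q) (u : ℕ → C) :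
    ∀ n, dbaRun δ q u (n + 1) = dbaRun δ (δ q (u 0)) (fun m => u (m + 1)) n := by
  intro n
  induction n with
  | zero => rfl
  | succ n ih =>
    show δ (dbaRun δ q u (n + 1)) (u (n + 1)) = _
    rw [ih]
    rfl

lemma st19_run_ext (s : ℕ → C) :
    ∀ (w : List C) (q : Q) (n : ℕ),
      dbaRun δ q (extWord w s) (w.length + n) = dbaRun δ (dstar δ q w) s n := by
  intro w
  induction w with
  | nil =>
    intro q n
    rw [st19_ext_nil]
    simp [dstar]
  | cons c w ih =>
    intro q n
    have hl : (c :: w).length + n = (w.length + n) + 1 := by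
      rw [List.length_cons]; omega
    rw [hl, st19_run_shift]
    have h0 : extWord (c :: w) s 0 = c := st19_ext_cons_zero c w s
    have hshift : (fun m => extWord (c :: w) s (m + 1)) = extWord w s := by
      funext m
      exact st19_ext_cons_succ c w s m
    rw [h0, hshift, ih (δ q c) n]
    rfl

lemma st19_ext_ge (w : List C) (s : ℕ → C) (n : ℕ) :
    extWord w s (w.length + n) = s n := by
  rw [extWord, dif_neg (by omega)]
  congr 1
  omega

lemma st19_accShift (qinit : Q) (w : List C) :
    accFrom δ acc (dstar δ qinit w) = {s | extWord w s ∈ accFrom δ acc qinit} := by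
  ext s
  constructor
  · intro h N
    obtain ⟨n, hn, hc⟩ := h N
    refine ⟨w.length + n, by omega, ?_⟩
    rw [st19_run_ext, st19_ext_ge]
    exact hc
  · intro h N
    obtain ⟨m, hm, hc⟩ := h (w.length + N)
    have hm' : m = w.length + (m - w.length) := by omega
    rw [hm', st19_run_ext, st19_ext_ge] at hc
    exact ⟨m - w.length, by omega, hc⟩

lemma st19_ext_mseg (s : ℕ → C) (N : ℕ) :
    extWord (mseg s 0 N) (fun n => s (N + n)) = s := by
  funext n
  by_cases h : n < N
  · rw [extWord, dif_pos (by rw [st19_mseg_length]; exact h)]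
    rw [st19_mseg_get]
    simp
  · rw [extWord, dif_neg (by rw [st19_mseg_length]; exact h)]
    simp only [st19_mseg_length]
    congr 1
    omega

/-- Saturation consequence: for every color `c` not accepting at `qmax`, there is a
nonempty safe cycle at `qmax` starting with `c`. -/
lemma st19_hasY (qinit : Q) (qmax : Q)
    (hsat : Saturated δ acc qinit) :
    ∀ c : C, ¬ acc qmax c → ∃ ρ : List C, (c :: ρ) ∈ safeCycles δ acc qmax := by
  intro c hcF
  set acc' : Q → C → Prop := fun p d => acc p d ∨ (p = qmax ∧ d = c) with hacc'
  have hsub : ∀ q d, acc q d → acc' q d := fun q d h => Or.inl h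
  have hne : acc' ≠ acc := by
    intro h
    apply hcF
    have : acc' qmax c := Or.inr ⟨rfl, rfl⟩
    rwa [h] at this
  have hNE := hsat acc' hsub hne
  -- accFrom acc ⊆ accFrom acc'
  have hmono : accFrom δ acc qinit ⊆ accFrom δ acc' qinit := by
    intro s hs N
    obtain ⟨n, hn, hc⟩ := hs N
    exact ⟨n, hn, Or.inl hc⟩
  -- get a witness in accFrom acc' \ accFrom acc
  have hwit : ∃ s, s ∈ accFrom δ acc' qinit ∧ s ∉ accFrom δ acc qinit := by
    by_contra h
    push_neg at h
    exact hNE (Set.Subset.antisymm h hmono)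
  obtain ⟨s, hs', hs⟩ := hwit
  -- s is eventually α-free
  have hNfree : ∃ N, ∀ n ≥ N, ¬ acc (dbaRun δ qinit s n) (s n) := by
    by_contra h
    push_neg at h
    exact hs (fun N => h N)
  obtain ⟨N, hN⟩ := hNfree
  -- two crossings of (qmax, c) beyond N
  have hcross : ∀ M, ∃ n ≥ M, dbaRun δ qinit s n = qmax ∧ s n = c := by
    intro M
    obtain ⟨n, hn, hc2⟩ := hs' (max M N)
    rcases hc2 with h | h
    · exact absurd h (hN n (le_trans (le_max_right M N) hn))
    · exact ⟨n, le_trans (le_max_left M N) hn, h⟩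
  obtain ⟨n1, hn1, hq1, hc1⟩ := hcross N
  obtain ⟨n2, hn2, hq2, hc2⟩ := hcross (n1 + 1)
  -- the segment between the two crossings is a safe cycle at qmax with head c
  obtain ⟨L', hLL⟩ : ∃ L', n2 - n1 = L' + 1 := ⟨n2 - n1 - 1, by omega⟩
  have hsafe : mseg s n1 (L' + 1) ∈ safeWords δ acc (dbaRun δ qinit s n1) := by
    apply st19_safe_mseg
    intro i _
    exact hN (n1 + i) (by omega)
  have hd : dstar δ (dbaRun δ qinit s n1) (mseg s n1 (L' + 1)) = qmax := by
    rw [st19_dstar_mseg]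
    have : n1 + (L' + 1) = n2 := by omega
    rw [this, hq2]
  rw [hq1] at hsafe hd
  have hform : mseg s n1 (L' + 1) = c :: mseg s (n1 + 1) L' := by
    show s n1 :: mseg s (n1 + 1) L' = _
    rw [hc1]
  rw [hform] at hsafe hd
  exact ⟨mseg s (n1 + 1) L', hsafe, hd⟩

end Aux

/-- for a saturated DBA recognizing a prefix-independent objective `W`
(all states reachable), if `q_max` is both an α-free-maximum and an
α-free-cycle-maximum, then `W = Büchi(F)` with `F = {c | (q_max, c) ∈ α}`. -/
theorem stmt19 {C Q : Type} [Fintype Q] (qinit : Q) (δ : Q → C → Q) (acc : Q → C → Prop)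
    (W : Set (ℕ → C)) (hW : accFrom δ acc qinit = W)
    (hreach : ∀ q : Q, ∃ w : List C, dstar δ qinit w = q)
    (hsat : Saturated δ acc qinit)
    (hpi : PrefixIndependent W)
    (qmax : Q)
    (hmax : ∀ q : Q, safeWords δ acc q ⊆ safeWords δ acc qmax)
    (hcycmax : ∀ q : Q, safeCycles δ acc q ⊆ safeCycles δ acc qmax) :
    W = BuchiCond {c | acc qmax c} := by
  -- (*) colors accepting at qmax accept everywhere
  have hstar : ∀ q c, acc qmax c → acc q c := by
    intro q c h
    by_contra hn
    have h1 : [c] ∈ safeWords δ acc q := (st19_safe_singleton δ acc).mpr hn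
    have h2 := hmax q h1
    exact ((st19_safe_singleton δ acc).mp h2) h
  -- accFrom qmax = W
  have hqmaxW : accFrom δ acc qmax = W := by
    obtain ⟨w0, hw0⟩ := hreach qmax
    rw [← hw0, st19_accShift]
    ext s
    show extWord w0 s ∈ accFrom δ acc qinit ↔ s ∈ W
    rw [hW]
    exact (hpi w0 s).symm
  -- (Y)
  have hY := st19_hasY δ acc qinit qmax hsat
  ext s
  constructor
  · -- W ⊆ Büchi(F)
    intro hsW
    by_contra hB
    have hB' : ∃ N, ∀ n ≥ N, ¬ acc qmax (s n) := by
      by_contra h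
      push_neg at h
      exact hB (fun N => h N)
    obtain ⟨N, hN⟩ := hB'
    set t : ℕ → C := fun n => s (N + n) with ht
    have hext : extWord (mseg s 0 N) t = s := st19_ext_mseg s N
    have htW : t ∈ W := by
      rw [hpi (mseg s 0 N) t, hext]
      exact hsW
    have htacc : t ∈ accFrom δ acc qmax := by rw [hqmaxW]; exact htW
    obtain ⟨n, -, hacc⟩ := htacc 0
    -- the word mseg t 0 (n+1) is F-free hence safe from qmax; contradiction
    have hfree : ∀ c ∈ mseg t 0 (n + 1), ¬ acc qmax c := by
      intro c hc
      obtain ⟨i, _, hci⟩ := st19_mseg_mem t (n + 1) 0 c hc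
      rw [hci]
      show ¬ acc qmax (t (0 + i))
      have : t (0 + i) = s (N + i) := by simp [ht]
      rw [this]
      exact hN (N + i) (by omega)
    have hsafe := st19_lemmaA δ acc hcycmax hY (mseg t 0 (n + 1)) hfree
    rw [st19_mseg_concat] at hsafe
    rw [st19_safe_append] at hsafe
    obtain ⟨-, hlast⟩ := hsafe
    have hrun : dstar δ qmax (mseg t 0 n) = dbaRun δ qmax t n := by
      have := st19_dstar_mseg δ qmax t n 0
      rw [Nat.zero_add] at this; exact this
    rw [hrun] at hlast
    have : ¬ acc (dbaRun δ qmax t n) (t (0 + n)) :=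
      (st19_safe_singleton δ acc).mp hlast
    rw [show (0 + n) = n from by omega] at this
    exact this hacc
  · -- Büchi(F) ⊆ W
    intro hsB
    rw [← hW]
    by_contra hns
    have hfree : ∃ N, ∀ n ≥ N, ¬ acc (dbaRun δ qinit s n) (s n) := by
      by_contra h
      push_neg at h
      exact hns (fun N => h N)
    obtain ⟨N, hN⟩ := hfree
    obtain ⟨n, hn, hsF⟩ := hsB N
    exact hN n hn (hstar _ _ hsF)
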